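/- arXiv:2509.22575 — 3 statements merged into one kernel-verified Lean document; each statement's English description precedes it below -/
import Mathlib

section
/- Let α and ι be types and ν : α → ι a function. The stabilizer of ν under the action of the symmetric group Perm(α) given by σ • ν = ν ∘ σ⁻¹ (equivalently, the subgroup {σ ∈ Perm(α) | ν ∘ σ = ν}) is isomorphic as a group to the product ∏_{i ∈ ι} Perm({x ∈ α | ν(x) = i}) of the symmetric groups of the fibers of ν. -/
/-- The stabilizer of `ν : α → ι` under the action `σ • ν = ν ∘ σ⁻¹` of
`Equiv.Perm α`, described equivalently as the subgroup `{σ | ν ∘ σ = ν}`. -/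
def fiberwisePermSubgroup {α ι : Type*} (ν : α → ι) : Subgroup (Equiv.Perm α) where
  carrier := {σ : Equiv.Perm α | ν ∘ σ = ν}
  one_mem' := rfl
  mul_mem' := by
    intro a b ha hb
    funext x
    show ν ((a * b) x) = ν x
    rw [Equiv.Perm.mul_apply]
    exact (congrFun ha (b x)).trans (congrFun hb x)
  inv_mem' := by
    intro a ha
    funext x
    show ν (a⁻¹ x) = ν x
    conv_rhs => rw [← Equiv.apply_symm_apply a x]
    exact (congrFun ha (a⁻¹ x)).symm

namespace FiberwiseAux

variable {α ι : Type*} (ν : α → ι)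

/-- The forward map: a family of fiber permutations gives a permutation of `α`. -/
def toPerm (f : ∀ i : ι, Equiv.Perm {x : α // ν x = i}) : Equiv.Perm α :=
  (Equiv.sigmaFiberEquiv ν).permCongr (Equiv.sigmaCongrRight f)

lemma toPerm_apply (f : ∀ i : ι, Equiv.Perm {x : α // ν x = i}) (x : α) :
    toPerm ν f x = (f (ν x) ⟨x, rfl⟩ : {y : α // ν y = ν x}).1 := rfl

lemma toPerm_mem (f : ∀ i : ι, Equiv.Perm {x : α // ν x = i}) :
    toPerm ν f ∈ fiberwisePermSubgroup ν := by
  funext x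
  show ν (toPerm ν f x) = ν x
  rw [toPerm_apply]
  exact (f (ν x) ⟨x, rfl⟩).2

/-- Restriction of a fiber-preserving permutation to a fiber. -/
def restrict (σ : fiberwisePermSubgroup ν) (i : ι) : Equiv.Perm {x : α // ν x = i} where
  toFun x := ⟨(σ : Equiv.Perm α) x.1, (congrFun σ.2 x.1).trans x.2⟩
  invFun x := ⟨(σ : Equiv.Perm α)⁻¹ x.1,
    (congrFun ((fiberwisePermSubgroup ν).inv_mem σ.2) x.1).trans x.2⟩
  left_inv x := Subtype.ext (Equiv.symm_apply_apply _ _)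
  right_inv x := Subtype.ext (Equiv.apply_symm_apply _ _)

end FiberwiseAux

open FiberwiseAux in
/-- The stabilizer of `ν : α → ι` in the symmetric group of `α` is isomorphic,
as a group, to the product of the symmetric groups of the fibers of `ν`. -/
theorem fiberwisePermSubgroup_mulEquiv_pi_perm {α ι : Type*} (ν : α → ι) :
    Nonempty (fiberwisePermSubgroup ν ≃* ∀ i : ι, Equiv.Perm {x : α // ν x = i}) := by
  refine ⟨{ toFun := restrict ν
            invFun := fun f => ⟨toPerm ν f, toPerm_mem ν f⟩
            left_inv := ?_
            right_inv := ?_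
            map_mul' := ?_ }⟩
  · intro σ
    ext x
    simp only [toPerm_apply]
    rfl
  · intro f
    funext i
    ext x
    obtain ⟨x, rfl⟩ := x
    show toPerm ν f x = _
    rw [toPerm_apply]
  · intro σ τ
    funext i
    ext x
    rfl
end

section
/- Let G be a simple graph on a vertex type V and let H₁, H₂ be subgraphs of G such that the coercion of each Hᵢ to a simple graph on its vertex set is a tree (connected and acyclic), and such that H₁.verts ∩ H₂.verts = {v} for a single vertex v. Then the coercion of the union subgraph H₁ ⊔ H₂ to a simple graph on H₁.verts ∪ H₂.verts is a tree. -/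
open SimpleGraph

private lemma lift_walk_aux {V : Type*} {G : SimpleGraph V} {H K : G.Subgraph} (hle : H ≤ K)
    (hadj : ∀ a b : V, a ∈ H.verts → b ∈ H.verts → K.Adj a b → H.Adj a b) :
    ∀ {x y : K.verts} (w : K.coe.Walk x y) (hx : (x : V) ∈ H.verts) (hy : (y : V) ∈ H.verts),
      (∀ z ∈ w.support, (z : V) ∈ H.verts) →
      ∃ w' : H.coe.Walk ⟨x, hx⟩ ⟨y, hy⟩, w'.map (Subgraph.inclusion hle) = w := by
  intro x y w
  induction w with
  | nil => intro hx hy _; exact ⟨Walk.nil, rfl⟩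
  | @cons x z y h p ih =>
    intro hx hy hs
    have hz : (z : V) ∈ H.verts := hs z (by simp)
    have hadj' : H.coe.Adj ⟨x, hx⟩ ⟨z, hz⟩ := hadj x z hx hz h
    obtain ⟨p', hp'⟩ := ih hz hy (fun u hu => hs u (by simp [hu]))
    exact ⟨Walk.cons hadj' p', by simp [hp']; rfl⟩

private lemma crossing_aux {V : Type*} {G : SimpleGraph V} {K : G.Subgraph} {A B : Set V} {v : V}
    (hadj : ∀ a b : V, K.Adj a b → (a ∈ A ∧ b ∈ A) ∨ (a ∈ B ∧ b ∈ B))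
    (hAB : A ∩ B ⊆ {v}) :
    ∀ {x y : K.verts} (w : K.coe.Walk x y), (x : V) ∉ A → (y : V) ∈ A →
      ∃ z ∈ w.support, (z : V) = v := by
  intro x y w
  induction w with
  | nil => intro hx hy; exact absurd hy hx
  | @cons x z y h p ih =>
    intro hx hy
    rcases hadj x z h with ⟨ha, _⟩ | ⟨_, hzB⟩
    · exact absurd ha hx
    by_cases hzA : (z : V) ∈ A
    · exact ⟨z, by simp, hAB ⟨hzA, hzB⟩⟩
    · obtain ⟨u, hu, huv⟩ := ih hzA hy
      exact ⟨u, by simp [hu], huv⟩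

/-- Gluing two subgraphs that are trees along a single shared vertex yields a
tree. -/
theorem isTree_sup_of_inter_singleton {V : Type*} {G : SimpleGraph V}
    (H₁ H₂ : G.Subgraph) (h1 : H₁.coe.IsTree) (h2 : H₂.coe.IsTree) (v : V)
    (hinter : H₁.verts ∩ H₂.verts = {v}) :
    (H₁ ⊔ H₂).coe.IsTree := by
  classical
  have hv : v ∈ H₁.verts ∩ H₂.verts := hinter.symm ▸ rfl
  -- edge localization
  have hadj1 : ∀ a b : V, a ∈ H₁.verts → b ∈ H₁.verts → (H₁ ⊔ H₂).Adj a b → H₁.Adj a b := by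
    intro a b ha hb hab
    rcases hab with h | h
    · exact h
    · exfalso
      have ha' : a ∈ H₁.verts ∩ H₂.verts := ⟨ha, h.fst_mem⟩
      have hb' : b ∈ H₁.verts ∩ H₂.verts := ⟨hb, h.snd_mem⟩
      rw [hinter] at ha' hb'
      exact h.ne (ha'.trans hb'.symm)
  have hadj2 : ∀ a b : V, a ∈ H₂.verts → b ∈ H₂.verts → (H₁ ⊔ H₂).Adj a b → H₂.Adj a b := by
    intro a b ha hb hab
    rcases hab with h | h
    · exfalso
      have ha' : a ∈ H₁.verts ∩ H₂.verts := ⟨h.fst_mem, ha⟩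
      have hb' : b ∈ H₁.verts ∩ H₂.verts := ⟨h.snd_mem, hb⟩
      rw [hinter] at ha' hb'
      exact h.ne (ha'.trans hb'.symm)
    · exact h
  have hsides : ∀ a b : V, (H₁ ⊔ H₂).Adj a b →
      (a ∈ H₁.verts ∧ b ∈ H₁.verts) ∨ (a ∈ H₂.verts ∧ b ∈ H₂.verts) := by
    intro a b hab
    rcases hab with h | h
    · exact Or.inl ⟨h.fst_mem, h.snd_mem⟩
    · exact Or.inr ⟨h.fst_mem, h.snd_mem⟩
  constructor
  · -- connectedness
    have hconn : (H₁ ⊔ H₂).Connected := by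
      refine Subgraph.connected_sup (H₁.preconnected_iff.mpr h1.isConnected.preconnected) (H₂.preconnected_iff.mpr h2.isConnected.preconnected) ⟨v, ?_⟩
      simpa using hv
    exact hconn.coe
  · -- acyclicity
    intro a c hc
    -- helper: no cycle with all support in one side
    have nocyc : ∀ (H : G.Subgraph), H ≤ H₁ ⊔ H₂ → H.coe.IsAcyclic →
        (∀ a b : V, a ∈ H.verts → b ∈ H.verts → (H₁ ⊔ H₂).Adj a b → H.Adj a b) →
        ∀ (x : (H₁ ⊔ H₂).verts) (w : (H₁ ⊔ H₂).coe.Walk x x), w.IsCycle →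
        (∀ z ∈ w.support, (z : V) ∈ H.verts) → False := by
      intro H hle hac hadj x w hw hs
      have hx : (x : V) ∈ H.verts := hs x w.start_mem_support
      obtain ⟨w', hw'⟩ := lift_walk_aux hle hadj w hx hx hs
      have : w'.IsCycle := by
        rw [← SimpleGraph.Walk.map_isCycle_iff_of_injective
          (Subgraph.inclusion.injective hle)]
        rw [hw']; exact hw
      exact hac _ this
    by_cases hall : ∀ z ∈ c.support, (z : V) ∈ H₁.verts
    · exact nocyc H₁ le_sup_left h1.IsAcyclic hadj1 a c hc hall
    push_neg at hall
    obtain ⟨b₀, hb₀mem, hb₀⟩ := hall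
    -- rotate the cycle to start at b₀
    set c₂ := c.rotate b₀ hb₀mem with hc₂def
    have hc₂ : c₂.IsCycle := hc.rotate hb₀mem
    have hb₀2 : (b₀ : V) ∈ H₂.verts := by
      have h0 : (b₀ : V) ∈ H₁.verts ∪ H₂.verts := b₀.2
      exact h0.resolve_left hb₀
    by_cases hall2 : ∀ z ∈ c₂.support, (z : V) ∈ H₂.verts
    · exact nocyc H₂ le_sup_right h2.IsAcyclic hadj2 b₀ c₂ hc₂ hall2
    push_neg at hall2
    obtain ⟨b₁, hb₁mem, hb₁⟩ := hall2
    have hb₁1 : (b₁ : V) ∈ H₁.verts := by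
      have h0 : (b₁ : V) ∈ H₁.verts ∪ H₂.verts := b₁.2
      exact h0.resolve_right hb₁
    -- split the cycle at b₁
    have hspec := c₂.take_spec hb₁mem
    set t := c₂.takeUntil b₁ hb₁mem with ht
    set d := c₂.dropUntil b₁ hb₁mem with hd
    obtain ⟨z1, hz1mem, hz1⟩ := crossing_aux hsides hinter.le t hb₀ hb₁1
    obtain ⟨z2, hz2mem, hz2⟩ :=
      crossing_aux (A := H₂.verts) (B := H₁.verts)
        (fun a b hab => (hsides a b hab).symm)
        (fun x hx => hinter.le ⟨hx.2, hx.1⟩) d hb₁ hb₀2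
    have hz12 : z1 = z2 := Subtype.ext (hz1.trans hz2.symm)
    have hz1ne : z1 ≠ b₀ := by
      intro h
      apply hb₀
      rw [← h, hz1]; exact hv.1
    have hz2ne : z2 ≠ b₁ := by
      intro h
      apply hb₁
      rw [← h, hz2]; exact hv.2
    have hz1tail : z1 ∈ t.support.tail := by
      have := t.support_eq_cons
      rw [this] at hz1mem
      rcases List.mem_cons.mp hz1mem with h | h
      · exact absurd h hz1ne
      · exact h
    have hz2tail : z2 ∈ d.support.tail := by
      have := d.support_eq_cons
      rw [this] at hz2mem
      rcases List.mem_cons.mp hz2mem with h | h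
      · exact absurd h hz2ne
      · exact h
    have hnodup := hc₂.support_nodup
    rw [← hspec, Walk.tail_support_append] at hnodup
    rw [List.nodup_append] at hnodup
    exact hnodup.2.2 z1 hz1tail z1 (hz12 ▸ hz2tail) rfl
end

section
/- Let C be a symmetric monoidal category (braided with symmetry β), a an object, c : a ⊗ a ⟶ 𝟙 a morphism with c ∘ β_{a,a} = c, and u : 𝟙 ⟶ a ⊗ a a morphism with β_{a,a} ∘ u = u. If the triangle identity (c ⊗ id_a) ∘ α⁻¹ ∘ (id_a ⊗ u) = id_a holds (with α the associator and unitors suppressed), then the other triangle identity (id_a ⊗ c) ∘ α ∘ (u ⊗ id_a) = id_a also holds; hence (a, c) is a duality datum with unit u. -/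
open CategoryTheory MonoidalCategory

section Aux

open CategoryTheory.Category CategoryTheory.BraidedCategory

private theorem symmetric_selfduality_aux {C : Type*} [Category C]
    [MonoidalCategory C] [SymmetricCategory C] (a : C)
    (c : a ⊗ a ⟶ 𝟙_ C) (u : 𝟙_ C ⟶ a ⊗ a)
    (h1 : a ◁ u ≫ (α_ a a a).inv ≫ c ▷ a = (ρ_ a).hom ≫ (λ_ a).inv) :
    (u ≫ (β_ a a).inv) ▷ a ≫ (α_ a a a).hom ≫ a ◁ ((β_ a a).hom ≫ c) =
      (λ_ a).hom ≫ (ρ_ a).inv := by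
  rw [Iso.eq_comp_inv, ← Iso.inv_comp_eq_id]
  calc
    _ = 𝟙 a ⊗≫ u ▷ a ⊗≫ ((β_ a a).inv ▷ a ⊗≫ a ◁ (β_ a a).hom) ≫ a ◁ c ⊗≫ 𝟙 a := by
      monoidal
    _ = 𝟙 a ⊗≫ u ▷ a ⊗≫ (𝟙 ((a ⊗ a) ⊗ a) ⊗≫ a ◁ (β_ a a).hom ⊗≫ (β_ a a).hom ▷ a
        ⊗≫ a ◁ (β_ a a).inv ⊗≫ (β_ a a).inv ▷ a ⊗≫ 𝟙 (a ⊗ a ⊗ a)) ⊗≫ a ◁ c ⊗≫ 𝟙 a := by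
      congr 3
      all_goals simp [monoidalComp]
      iterate 2 rw [← IsIso.eq_inv_comp]
      repeat rw [← assoc]
      iterate 4 rw [← IsIso.comp_inv_eq]
      simpa using (yang_baxter a a a).symm
    _ = 𝟙 a ⊗≫ (u ▷ a ≫ (β_ (a ⊗ a) a).hom) ⊗≫ ((β_ a (a ⊗ a)).inv ≫ a ◁ c) ⊗≫ 𝟙 a := by
      simp [monoidalComp, braiding_tensor_left_hom, braiding_tensor_right_inv]
    _ = _ := by
      rw [braiding_naturality_left, ← braiding_inv_naturality_left]
      simp [monoidalComp]
      slice_lhs 2 4 => rw [h1]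
      simp

end Aux

/-- In a symmetric monoidal category, for a symmetric counit `c : a ⊗ a ⟶ 𝟙`
and a symmetric candidate unit `u : 𝟙 ⟶ a ⊗ a`, one triangle identity implies
the other, so that `(a, c)` is a duality datum with unit `u`. -/
theorem symmetric_selfduality_other_triangle {C : Type*} [Category C]
    [MonoidalCategory C] [SymmetricCategory C] (a : C)
    (c : a ⊗ a ⟶ 𝟙_ C) (u : 𝟙_ C ⟶ a ⊗ a)
    (hc : (β_ a a).hom ≫ c = c) (hu : u ≫ (β_ a a).hom = u)
    (h1 : (ρ_ a).inv ≫ (a ◁ u) ≫ (α_ a a a).inv ≫ (c ▷ a) ≫ (λ_ a).hom = 𝟙 a) :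
    (λ_ a).inv ≫ (u ▷ a) ≫ (α_ a a a).hom ≫ (a ◁ c) ≫ (ρ_ a).hom = 𝟙 a := by
  have hβ : (β_ a a).inv = (β_ a a).hom := by
    rw [← cancel_mono (β_ a a).hom, Iso.inv_hom_id, SymmetricCategory.symmetry]
  have h1' : a ◁ u ≫ (α_ a a a).inv ≫ c ▷ a = (ρ_ a).hom ≫ (λ_ a).inv := by
    rw [← cancel_epi (ρ_ a).inv, ← cancel_mono (λ_ a).hom]
    simpa using h1
  have := symmetric_selfduality_aux a c u h1'
  rw [hβ, hu, hc] at this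
  slice_lhs 2 4 => rw [this]
  simp
end
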